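/- Let d ≥ 1, ρ > 0, and let f : ℝ^d → ℝ be convex and continuously differentiable with M-Lipschitz gradient, M ≥ 0. Then for every θ ∈ ℝ^d, ∫_{ℝ^d} exp(f(θ) − f(z) − ‖θ − z‖₂²/(2ρ²)) dz ≥ exp(ρ² ‖∇f(θ)‖₂² / (2(1 + 2ρ² M))) · (2πρ² / (1 + 2ρ² M))^{d/2}. -/

import Mathlib

open MeasureTheory

noncomputable section

/-- ℝ^d with the Euclidean (ℓ²) structure. -/
abbrev En (d : ℕ) := EuclideanSpace ℝ (Fin d)

/-- The parabolic cylinder function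
`D_{−d}(z) = (exp(−z²/4)/Γ(d)) ∫₀^∞ exp(−xz − x²/2) x^{d−1} dx`. -/
noncomputable def pcf (d : ℕ) (z : ℝ) : ℝ :=
  (Real.exp (-z ^ 2 / 4) / Real.Gamma d) *
    ∫ x in Set.Ioi (0 : ℝ), Real.exp (-(x * z) - x ^ 2 / 2) * x ^ (d - 1)

/-- The normalized density `π(θ) = exp(−f(θ))/C_π`. -/
noncomputable def nrmDensity {d : ℕ} (f : En d → ℝ) (θ : En d) : ℝ :=
  Real.exp (-f θ) / ∫ θ' : En d, Real.exp (-f θ')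

/-- The normalized Gaussian-smoothed density
`π_ρ(θ) = (1/C_{π_ρ}) ∫ exp(−f(z) − ‖z−θ‖²/(2ρ²)) dz`. -/
noncomputable def gaussSmoothed {d : ℕ} (f : En d → ℝ) (ρ : ℝ) (θ : En d) : ℝ :=
  (∫ z : En d, Real.exp (-f z - ‖z - θ‖ ^ 2 / (2 * ρ ^ 2))) /
    ∫ θ' : En d, ∫ z : En d, Real.exp (-f z - ‖z - θ'‖ ^ 2 / (2 * ρ ^ 2))

open Real
open scoped InnerProductSpace

section AuxLemmas

variable {d : ℕ}

private lemma gauss_key {a : ℝ} (w u : En d) :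
    (-(a:ℂ) * ‖u‖^2 + 1 * (⟪w, u⟫_ℝ : ℂ)) = ((⟪w, u⟫_ℝ - a * ‖u‖^2 : ℝ) : ℂ) := by
  push_cast; ring

private lemma gauss_integrable {a : ℝ} (ha : 0 < a) (w : En d) :
    Integrable (fun u : En d => Real.exp (⟪w, u⟫_ℝ - a * ‖u‖ ^ 2)) := by
  have h := (GaussianFourier.integrable_cexp_neg_mul_sq_norm_add
    (V := En d) (b := (a : ℂ)) (by simpa using ha) 1 w).re
  refine h.congr (Filter.Eventually.of_forall fun u => ?_)
  show (Complex.exp (-(a:ℂ) * ‖u‖ ^ 2 + 1 * (⟪w, u⟫_ℝ : ℂ))).re = _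
  rw [gauss_key w u, ← Complex.ofReal_exp, Complex.ofReal_re]

private lemma gauss_integral {a : ℝ} (ha : 0 < a) (w : En d) :
    ∫ u : En d, Real.exp (⟪w, u⟫_ℝ - a * ‖u‖ ^ 2) =
      (π / a) ^ ((d : ℝ) / 2) * Real.exp (‖w‖ ^ 2 / (4 * a)) := by
  have h := GaussianFourier.integral_cexp_neg_mul_sq_norm_add
    (V := En d) (b := (a : ℂ)) (by simpa using ha) 1 w
  rw [← Complex.ofReal_inj]
  have hL : ((∫ u : En d, Real.exp (⟪w, u⟫_ℝ - a * ‖u‖ ^ 2) : ℝ) : ℂ)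
      = ∫ u : En d, Complex.exp (-(a:ℂ) * ‖u‖ ^ 2 + 1 * (⟪w, u⟫_ℝ : ℂ)) :=
    (integral_ofReal (𝕜 := ℂ)).symm.trans (integral_congr_ae
      (Filter.Eventually.of_forall fun u => by
        show ((Real.exp _ : ℝ) : ℂ) = Complex.exp (-(a:ℂ) * ‖u‖ ^ 2 + 1 * (⟪w, u⟫_ℝ : ℂ))
        rw [gauss_key w u, Complex.ofReal_exp]))
  rw [hL, h]
  have hfr : (Module.finrank ℝ (En d) : ℂ) = (d : ℂ) := by
    norm_cast
    exact finrank_euclideanSpace_fin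
  rw [hfr]
  have hbase : (0:ℝ) ≤ π / a := by positivity
  rw [Complex.ofReal_mul, Complex.ofReal_cpow hbase, Complex.ofReal_exp]
  push_cast
  norm_num

private lemma inner_grad_eq (f : En d → ℝ) (x u : En d) :
    ⟪gradient f x, u⟫_ℝ = fderiv ℝ f x u := by
  rw [gradient]
  exact InnerProductSpace.toDual_symm_apply

private lemma line_hasDerivAt {f : En d → ℝ} (hC1 : ContDiff ℝ 1 f) (θ u : En d) (t : ℝ) :
    HasDerivAt (fun s : ℝ => f (θ + s • u)) (fderiv ℝ f (θ + t • u) u) t := by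
  have h1 : HasFDerivAt f (fderiv ℝ f (θ + t • u)) (θ + t • u) :=
    (hC1.differentiable one_ne_zero (θ + t • u)).hasFDerivAt
  have h2 : HasDerivAt (fun s : ℝ => θ + s • u) u t := by
    simpa using ((hasDerivAt_id t).smul_const u).const_add θ
  exact h1.comp_hasDerivAt t h2

private lemma support_ineq {f : En d → ℝ} (hconv : ConvexOn ℝ Set.univ f)
    (hC1 : ContDiff ℝ 1 f) (θ z : En d) : f θ + ⟪gradient f θ, z - θ⟫_ℝ ≤ f z := by
  set u := z - θ with hu
  have hφ : ConvexOn ℝ Set.univ (fun t : ℝ => f (θ + t • u)) := by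
    have h := hconv.comp_affineMap (AffineMap.lineMap θ z)
    have heq : (f ∘ (AffineMap.lineMap θ z)) = fun t : ℝ => f (θ + t • u) := by
      funext t
      simp [AffineMap.lineMap_apply, hu, add_comm]
    rw [heq] at h
    simpa using h
  have hd := hφ.le_slope_of_hasDerivAt (Set.mem_univ (0:ℝ)) (Set.mem_univ (1:ℝ)) one_pos
    (by simpa using line_hasDerivAt hC1 θ u 0)
  rw [slope_def_field] at hd
  simp only [zero_smul, add_zero, one_smul, sub_zero, div_one] at hd
  have hz : θ + u = z := by rw [hu]; abel
  rw [hz] at hd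
  rw [inner_grad_eq]
  linarith

private lemma descent_ineq {f : En d → ℝ} (hC1 : ContDiff ℝ 1 f) {M : ℝ}
    (hgradLip : ∀ θ η : En d, ‖gradient f θ - gradient f η‖ ≤ M * ‖θ - η‖)
    (θ z : En d) : f z ≤ f θ + ⟪gradient f θ, z - θ⟫_ℝ + M / 2 * ‖z - θ‖ ^ 2 := by
  set u := z - θ with hu
  have hgc : Continuous fun x : En d => fderiv ℝ f x := hC1.continuous_fderiv one_ne_zero
  have hcont : Continuous fun t : ℝ => fderiv ℝ f (θ + t • u) u :=
    ((ContinuousLinearMap.apply ℝ ℝ u).continuous).comp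
      (hgc.comp (continuous_const.add (continuous_id.smul continuous_const)))
  have hFTC := intervalIntegral.integral_eq_sub_of_hasDerivAt
    (f := fun s : ℝ => f (θ + s • u)) (f' := fun t => fderiv ℝ f (θ + t • u) u)
    (fun t _ => line_hasDerivAt hC1 θ u t) (hcont.intervalIntegrable 0 1)
  have hbound : ∀ t ∈ Set.Icc (0:ℝ) 1,
      fderiv ℝ f (θ + t • u) u ≤ ⟪gradient f θ, u⟫_ℝ + (M * ‖u‖ ^ 2) * t := by
    intro t ht
    have h1 : fderiv ℝ f (θ + t • u) u - ⟪gradient f θ, u⟫_ℝ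
        = ⟪gradient f (θ + t • u) - gradient f θ, u⟫_ℝ := by
      rw [inner_sub_left, inner_grad_eq, inner_grad_eq]
    have h2 := real_inner_le_norm (gradient f (θ + t • u) - gradient f θ) u
    have h3 := hgradLip (θ + t • u) θ
    have h4 : ‖θ + t • u - θ‖ = t * ‖u‖ := by
      rw [add_sub_cancel_left, norm_smul, Real.norm_eq_abs, abs_of_nonneg ht.1]
    rw [h4] at h3
    nlinarith [norm_nonneg u, norm_nonneg (gradient f (θ + t • u) - gradient f θ), ht.1]
  have hIr : IntervalIntegrable (fun t : ℝ => ⟪gradient f θ, u⟫_ℝ + (M * ‖u‖ ^ 2) * t)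
      volume 0 1 :=
    (continuous_const.add (continuous_const.mul continuous_id')).intervalIntegrable 0 1
  have hmono := intervalIntegral.integral_mono_on zero_le_one
    (hcont.intervalIntegrable 0 1) hIr hbound
  have hval : ∫ t in (0:ℝ)..1, (⟪gradient f θ, u⟫_ℝ + (M * ‖u‖ ^ 2) * t)
      = ⟪gradient f θ, u⟫_ℝ + M / 2 * ‖u‖ ^ 2 := by
    have h1 : IntervalIntegrable (fun t : ℝ => M * ‖u‖ ^ 2 * t) volume 0 1 :=
      (continuous_const.mul continuous_id').intervalIntegrable 0 1
    rw [intervalIntegral.integral_add intervalIntegrable_const h1,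
      intervalIntegral.integral_const_mul]
    simp [integral_id]
    ring
  rw [hFTC] at hmono
  rw [hval] at hmono
  simp only [zero_smul, add_zero, one_smul] at hmono
  have hz : θ + u = z := by rw [hu]; abel
  rw [hz] at hmono
  linarith

end AuxLemmas

/-- Lower bound on the smoothing integral for a convex, continuously differentiable `f` with
`M`-Lipschitz gradient:
`∫ exp(f(θ) − f(z) − ‖θ−z‖²/(2ρ²)) dz ≥ exp(ρ²‖∇f(θ)‖²/(2(1+2ρ²M)))(2πρ²/(1+2ρ²M))^{d/2}`. -/
theorem statement17 {d : ℕ} (hd : 1 ≤ d) (ρ : ℝ) (hρ : 0 < ρ) (f : En d → ℝ) (M : ℝ)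
    (hM : 0 ≤ M) (hconv : ConvexOn ℝ Set.univ f) (hC1 : ContDiff ℝ 1 f)
    (hgradLip : ∀ θ η : En d, ‖gradient f θ - gradient f η‖ ≤ M * ‖θ - η‖) (θ : En d) :
    Real.exp (ρ ^ 2 * ‖gradient f θ‖ ^ 2 / (2 * (1 + 2 * ρ ^ 2 * M))) *
        (2 * Real.pi * ρ ^ 2 / (1 + 2 * ρ ^ 2 * M)) ^ ((d : ℝ) / 2) ≤
      ∫ z : En d, Real.exp (f θ - f z - ‖θ - z‖ ^ 2 / (2 * ρ ^ 2)) := by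
  set g := gradient f θ with hgdef
  have hρ2 : (0:ℝ) < 2 * ρ ^ 2 := by positivity
  have hden : (0:ℝ) < 1 + 2 * ρ ^ 2 * M := by positivity
  set a : ℝ := M + 1 / (2 * ρ ^ 2) with hadef
  have ha : 0 < a := by positivity
  have ha' : (0:ℝ) < 1 / (2 * ρ ^ 2) := by positivity
  have hlow : ∀ z : En d, Real.exp (⟪-g, z - θ⟫_ℝ - a * ‖z - θ‖ ^ 2)
      ≤ Real.exp (f θ - f z - ‖θ - z‖ ^ 2 / (2 * ρ ^ 2)) := by
    intro z
    apply Real.exp_le_exp.2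
    have hdz := descent_ineq hC1 hgradLip θ z
    have hn : ‖θ - z‖ = ‖z - θ‖ := norm_sub_rev _ _
    rw [inner_neg_left, hn, hadef]
    have hsq : (0:ℝ) ≤ ‖z - θ‖ ^ 2 := sq_nonneg _
    have h3 : ‖z - θ‖ ^ 2 / (2 * ρ ^ 2) = (1 / (2 * ρ ^ 2)) * ‖z - θ‖ ^ 2 := by ring
    rw [h3]
    nlinarith [hdz, hsq, hM]
  have hup : ∀ z : En d, Real.exp (f θ - f z - ‖θ - z‖ ^ 2 / (2 * ρ ^ 2))
      ≤ Real.exp (⟪-g, z - θ⟫_ℝ - (1 / (2 * ρ ^ 2)) * ‖z - θ‖ ^ 2) := by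
    intro z
    apply Real.exp_le_exp.2
    have hsz := support_ineq hconv hC1 θ z
    have hn : ‖θ - z‖ = ‖z - θ‖ := norm_sub_rev _ _
    rw [inner_neg_left, hn]
    have h3 : ‖z - θ‖ ^ 2 / (2 * ρ ^ 2) = (1 / (2 * ρ ^ 2)) * ‖z - θ‖ ^ 2 := by ring
    rw [h3]
    linarith
  have hIl : Integrable (fun z : En d => Real.exp (⟪-g, z - θ⟫_ℝ - a * ‖z - θ‖ ^ 2)) :=
    (gauss_integrable ha (-g)).comp_sub_right θ
  have hIu : Integrable
      (fun z : En d => Real.exp (⟪-g, z - θ⟫_ℝ - (1 / (2 * ρ ^ 2)) * ‖z - θ‖ ^ 2)) :=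
    (gauss_integrable ha' (-g)).comp_sub_right θ
  have hcontf : Continuous fun z : En d =>
      Real.exp (f θ - f z - ‖θ - z‖ ^ 2 / (2 * ρ ^ 2)) := by
    apply Real.continuous_exp.comp
    exact (continuous_const.sub hC1.continuous).sub
      (((continuous_const.sub continuous_id).norm.pow 2).div_const _)
  have hIf : Integrable (fun z : En d => Real.exp (f θ - f z - ‖θ - z‖ ^ 2 / (2 * ρ ^ 2))) := by
    refine hIu.mono' hcontf.aestronglyMeasurable (Filter.Eventually.of_forall fun z => ?_)
    rw [Real.norm_eq_abs, abs_of_pos (Real.exp_pos _)]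
    exact hup z
  have hmain := integral_mono hIl hIf hlow
  have htrans : ∫ z : En d, Real.exp (⟪-g, z - θ⟫_ℝ - a * ‖z - θ‖ ^ 2)
      = ∫ u : En d, Real.exp (⟪-g, u⟫_ℝ - a * ‖u‖ ^ 2) :=
    integral_sub_right_eq_self (fun u : En d => Real.exp (⟪-g, u⟫_ℝ - a * ‖u‖ ^ 2)) θ
  rw [htrans, gauss_integral ha (-g), norm_neg] at hmain
  refine le_trans (le_of_eq ?_) hmain
  rw [mul_comm]
  have hane : a ≠ 0 := ne_of_gt ha
  have hdne : (1 + 2 * ρ ^ 2 * M) ≠ 0 := ne_of_gt hden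
  have hrne : ρ ≠ 0 := ne_of_gt hρ
  congr 1
  · congr 1
    rw [hadef]
    field_simp
    ring
  · congr 1
    rw [hadef]
    field_simp
    ring
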